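/- Fix 0 < α < 1 and set a_k = ∏_{i=1}^{k} (1 − (i+1)^{−α}) for k ≥ 1. Then the compact set E = {0, 1, a_1, a_2, …} ⊂ ℝ is quasi uniformly disconnected. -/

import Mathlib

open Filter Topology Metric Set

/-- A set `E ⊆ ℝ` is quasi uniformly disconnected: there is `ψ : ℝ⁺ → ℝ⁺` with `ψ r < r`
and `log ψ(r) / log r → 1` as `r → 0⁺`, and `r* > 0`, such that for every `x ∈ E` and
`0 < r < r*` there is `E ∩ B(x, ψ r) ⊆ F ⊆ B(x, r)` with `dist(F, E \ F) ≥ ψ r`. -/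
def QuasiUniformlyDisconnectedSet (E : Set ℝ) : Prop :=
  ∃ ψ : ℝ → ℝ, (∀ r : ℝ, 0 < r → 0 < ψ r ∧ ψ r < r) ∧
    Filter.Tendsto (fun r => Real.log (ψ r) / Real.log r) (𝓝[>] (0 : ℝ)) (𝓝 1) ∧
    ∃ rstar : ℝ, 0 < rstar ∧ ∀ x ∈ E, ∀ r : ℝ, 0 < r → r < rstar →
      ∃ F : Set ℝ, F ⊆ E ∧ E ∩ Metric.closedBall x (ψ r) ⊆ F ∧
        F ⊆ Metric.closedBall x r ∧ ∀ y ∈ F, ∀ z ∈ E \ F, ψ r ≤ dist y z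

/-- `a_k = ∏_{i=1}^k (1 - (i+1)^(-α))`; note `a_0 = 1` (empty product). -/
noncomputable def aSeq (α : ℝ) (k : ℕ) : ℝ :=
  ∏ i ∈ Finset.Icc 1 k, (1 - ((i : ℝ) + 1) ^ (-α))

/-- The countable compact set `E = {0, 1, a_1, a_2, …}`. -/
noncomputable def aSet (α : ℝ) : Set ℝ :=
  insert (0 : ℝ) (insert 1 {x : ℝ | ∃ k : ℕ, 1 ≤ k ∧ x = aSeq α k})

namespace QUD

lemma aSeq_zero (α : ℝ) : aSeq α 0 = 1 := by simp [aSeq]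

lemma aSeq_succ (α : ℝ) (k : ℕ) :
    aSeq α (k + 1) = aSeq α k * (1 - ((k : ℝ) + 2) ^ (-α)) := by
  rw [aSeq, aSeq, Finset.prod_Icc_succ_top (Nat.le_add_left 1 k)]
  have h : ((k + 1 : ℕ) : ℝ) + 1 = (k : ℝ) + 2 := by push_cast; ring
  rw [h]

variable {α : ℝ}

lemma rpow_lt_one' (hα0 : 0 < α) {x : ℝ} (hx : 1 < x) : x ^ (-α) < 1 :=
  Real.rpow_lt_one_of_one_lt_of_neg hx (by linarith)

lemma factor_pos (hα0 : 0 < α) {i : ℕ} (hi : 1 ≤ i) : 0 < 1 - ((i : ℝ) + 1) ^ (-α) := by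
  have h1 : (1 : ℝ) < (i : ℝ) + 1 := by
    have : (1 : ℝ) ≤ (i : ℝ) := by exact_mod_cast hi
    linarith
  linarith [rpow_lt_one' hα0 h1]

lemma aSeq_pos (hα0 : 0 < α) (k : ℕ) : 0 < aSeq α k := by
  apply Finset.prod_pos
  intro i hi
  exact factor_pos hα0 (Finset.mem_Icc.1 hi).1

lemma aSeq_succ_lt (hα0 : 0 < α) (k : ℕ) : aSeq α (k + 1) < aSeq α k := by
  rw [aSeq_succ]
  have hb : (0 : ℝ) < ((k : ℝ) + 2) ^ (-α) := Real.rpow_pos_of_pos (by positivity) _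
  nlinarith [aSeq_pos hα0 k]

lemma aSeq_strictAnti (hα0 : 0 < α) : StrictAnti (aSeq α) :=
  strictAnti_nat_of_succ_lt (aSeq_succ_lt hα0)

lemma aSeq_le_one (hα0 : 0 < α) (k : ℕ) : aSeq α k ≤ 1 := by
  have := (aSeq_strictAnti hα0).antitone (Nat.zero_le k)
  rwa [aSeq_zero] at this

/-- the gap between `a k` and `a (k+1)` -/
noncomputable def gapSeq (α : ℝ) (k : ℕ) : ℝ := aSeq α k * ((k : ℝ) + 2) ^ (-α)

lemma gap_eq_sub (k : ℕ) : gapSeq α k = aSeq α k - aSeq α (k + 1) := by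
  rw [gapSeq, aSeq_succ]; ring

lemma gap_pos (hα0 : 0 < α) (k : ℕ) : 0 < gapSeq α k :=
  mul_pos (aSeq_pos hα0 k) (Real.rpow_pos_of_pos (by positivity) _)

lemma gap_lt (hα0 : 0 < α) (k : ℕ) : gapSeq α k < aSeq α k := by
  have := aSeq_pos hα0 (k + 1)
  rw [gap_eq_sub]; linarith

lemma gap_strictAnti (hα0 : 0 < α) : StrictAnti (gapSeq α) := by
  apply strictAnti_nat_of_succ_lt
  intro k
  rw [gapSeq, gapSeq]
  have h1 : aSeq α (k + 1) < aSeq α k := aSeq_succ_lt hα0 k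
  have h2 : ((k : ℝ) + 1 + 2) ^ (-α) ≤ ((k : ℝ) + 2) ^ (-α) :=
    Real.rpow_le_rpow_of_nonpos (by positivity) (by linarith) (by linarith)
  have h3 : (0 : ℝ) < ((k : ℝ) + 1 + 2) ^ (-α) := Real.rpow_pos_of_pos (by positivity) _
  have h4 : 0 ≤ aSeq α k := (aSeq_pos hα0 k).le
  calc aSeq α (k + 1) * (((k : ℕ) + 1 : ℕ) + 2 : ℝ) ^ (-α)
      = aSeq α (k + 1) * ((k : ℝ) + 1 + 2) ^ (-α) := by norm_num
    _ < aSeq α k * ((k : ℝ) + 2) ^ (-α) := mul_lt_mul h1 h2 h3 h4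


lemma aSeq_le_pow (hα0 : 0 < α) (k : ℕ) :
    aSeq α k ≤ (1 - ((k : ℝ) + 1) ^ (-α)) ^ k := by
  have h := Finset.prod_le_prod (f := fun i : ℕ => 1 - ((i : ℝ) + 1) ^ (-α))
      (g := fun _ : ℕ => 1 - ((k : ℝ) + 1) ^ (-α)) (s := Finset.Icc 1 k)
      (fun i hi => (factor_pos hα0 (Finset.mem_Icc.1 hi).1).le)
      (fun i hi => by
        show 1 - ((i : ℝ) + 1) ^ (-α) ≤ 1 - ((k : ℝ) + 1) ^ (-α)
        have hik : (i : ℝ) ≤ (k : ℝ) := by exact_mod_cast (Finset.mem_Icc.1 hi).2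
        have : ((k : ℝ) + 1) ^ (-α) ≤ ((i : ℝ) + 1) ^ (-α) :=
          Real.rpow_le_rpow_of_nonpos (by positivity) (by linarith) (by linarith)
        linarith)
  rw [Finset.prod_const, Nat.card_Icc] at h
  simpa [aSeq] using h

lemma aSeq_le_exp (hα0 : 0 < α) (hα1 : α < 1) {k : ℕ} (hk : 1 ≤ k) :
    aSeq α k ≤ Real.exp (-((2 : ℝ) ^ (-α) * (k : ℝ) ^ (1 - α))) := by
  set x : ℝ := ((k : ℝ) + 1) ^ (-α) with hx
  have hxpos : 0 < x := Real.rpow_pos_of_pos (by positivity) _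
  have hk1 : (1 : ℝ) ≤ (k : ℝ) := by exact_mod_cast hk
  have hkpos : (0 : ℝ) < (k : ℝ) := by linarith
  have hx1 : x < 1 := rpow_lt_one' hα0 (by linarith)
  have h1 : aSeq α k ≤ (1 - x) ^ k := aSeq_le_pow hα0 k
  have h2 : (1 - x) ^ k ≤ Real.exp (-x) ^ k := by
    apply pow_le_pow_left₀ (by linarith)
    linarith [Real.add_one_le_exp (-x)]
  have h3 : Real.exp (-x) ^ k = Real.exp ((k : ℝ) * (-x)) := (Real.exp_nat_mul _ k).symm
  have h4 : (2 : ℝ) ^ (-α) * (k : ℝ) ^ (1 - α) ≤ (k : ℝ) * x := by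
    have e1 : (k : ℝ) ^ (1 - α) = (k : ℝ) * (k : ℝ) ^ (-α) := by
      rw [show (1 : ℝ) - α = 1 + -α by ring, Real.rpow_add hkpos, Real.rpow_one]
    have e2 : (2 : ℝ) ^ (-α) * (k : ℝ) ^ (-α) = ((2 : ℝ) * k) ^ (-α) :=
      (Real.mul_rpow (by norm_num) hkpos.le).symm
    have e3 : ((2 : ℝ) * k) ^ (-α) ≤ x := by
      rw [hx]
      exact Real.rpow_le_rpow_of_nonpos (by linarith) (by linarith) (by linarith)
    calc (2 : ℝ) ^ (-α) * (k : ℝ) ^ (1 - α) = (k : ℝ) * ((2 : ℝ) ^ (-α) * (k : ℝ) ^ (-α)) := by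
          rw [e1]; ring
      _ = (k : ℝ) * ((2 : ℝ) * k) ^ (-α) := by rw [e2]
      _ ≤ (k : ℝ) * x := by
          apply mul_le_mul_of_nonneg_left e3 hkpos.le
  calc aSeq α k ≤ Real.exp ((k : ℝ) * (-x)) := by rw [← h3]; exact h1.trans h2
    _ ≤ Real.exp (-((2 : ℝ) ^ (-α) * (k : ℝ) ^ (1 - α))) := by
        apply Real.exp_le_exp.2; linarith

lemma log_aSeq_le (hα0 : 0 < α) (hα1 : α < 1) {k : ℕ} (hk : 1 ≤ k) :
    Real.log (aSeq α k) ≤ -((2 : ℝ) ^ (-α) * (k : ℝ) ^ (1 - α)) :=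
  (Real.log_le_iff_le_exp (aSeq_pos hα0 k)).2 (aSeq_le_exp hα0 hα1 hk)

lemma aSeq_tendsto_zero (hα0 : 0 < α) (hα1 : α < 1) :
    Tendsto (aSeq α) atTop (𝓝 0) := by
  apply squeeze_zero' (Filter.Eventually.of_forall fun k => (aSeq_pos hα0 k).le)
    (Filter.eventually_atTop.2 ⟨1, fun k hk => aSeq_le_exp hα0 hα1 hk⟩)
  have h1 : Tendsto (fun k : ℕ => (2 : ℝ) ^ (-α) * (k : ℝ) ^ (1 - α)) atTop atTop :=
    ((tendsto_rpow_atTop (by linarith)).comp tendsto_natCast_atTop_atTop).const_mul_atTop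
      (Real.rpow_pos_of_pos (by norm_num) _)
  have h2 : Tendsto (fun k : ℕ => -((2 : ℝ) ^ (-α) * (k : ℝ) ^ (1 - α))) atTop atBot :=
    tendsto_neg_atTop_atBot.comp h1
  exact Real.tendsto_exp_atBot.comp h2


/-- least `n` with `a n ≤ r` -/
noncomputable def nfun (α r : ℝ) : ℕ := sInf {n : ℕ | aSeq α n ≤ r}

/-- `ψ r` is the gap just below `a (nfun r)` -/
noncomputable def psiFun (α r : ℝ) : ℝ := gapSeq α (nfun α r)

lemma nfun_nonempty (hα0 : 0 < α) (hα1 : α < 1) {r : ℝ} (hr : 0 < r) :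
    {n : ℕ | aSeq α n ≤ r}.Nonempty := by
  obtain ⟨n, hn⟩ := ((aSeq_tendsto_zero hα0 hα1).eventually_lt_const hr).exists
  exact ⟨n, hn.le⟩

lemma aSeq_nfun_le (hα0 : 0 < α) (hα1 : α < 1) {r : ℝ} (hr : 0 < r) :
    aSeq α (nfun α r) ≤ r :=
  Nat.sInf_mem (nfun_nonempty hα0 hα1 hr)

lemma lt_aSeq_of_lt_nfun {r : ℝ} {j : ℕ} (hj : j < nfun α r) : r < aSeq α j := by
  have := Nat.notMem_of_lt_sInf hj
  simpa using not_le.1 this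

lemma lt_nfun_of_lt (hα0 : 0 < α) (hα1 : α < 1) {r : ℝ} {M : ℕ} (hr : 0 < r)
    (h : r < aSeq α M) : M < nfun α r := by
  by_contra hc
  push_neg at hc
  have := (aSeq_strictAnti hα0).antitone hc
  have := aSeq_nfun_le hα0 hα1 hr
  linarith

lemma psi_pos (hα0 : 0 < α) {r : ℝ} : 0 < psiFun α r := gap_pos hα0 _

lemma psi_lt (hα0 : 0 < α) (hα1 : α < 1) {r : ℝ} (hr : 0 < r) : psiFun α r < r :=
  lt_of_lt_of_le (gap_lt hα0 _) (aSeq_nfun_le hα0 hα1 hr)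

lemma nfun_tendsto (hα0 : 0 < α) (hα1 : α < 1) :
    Tendsto (fun r => nfun α r) (𝓝[>] (0 : ℝ)) atTop := by
  rw [Filter.tendsto_atTop]
  intro M
  filter_upwards [Ioo_mem_nhdsGT_of_mem (show (0:ℝ) ∈ Ico (0:ℝ) (aSeq α M) from
    ⟨le_refl _, aSeq_pos hα0 M⟩)] with r hr
  exact (lt_nfun_of_lt hα0 hα1 hr.1 hr.2).le


/-- error bound function -/
noncomputable def Bfun (α : ℝ) (N : ℕ) : ℝ :=
  (-Real.log (1 - (2:ℝ) ^ (-α)) + α * Real.log ((N : ℝ) + 2)) /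
    ((2:ℝ) ^ (-α) * ((N : ℝ) - 1) ^ (1 - α))

lemma Bfun_tendsto (hα0 : 0 < α) (hα1 : α < 1) :
    Tendsto (fun N : ℕ => Bfun α N) atTop (𝓝 0) := by
  have hc2 : (0:ℝ) < (2:ℝ) ^ (-α) := Real.rpow_pos_of_pos (by norm_num) _
  have hreal : Tendsto (fun x : ℝ =>
      (-Real.log (1 - (2:ℝ) ^ (-α)) + α * Real.log (x + 2)) /
        ((2:ℝ) ^ (-α) * (x - 1) ^ (1 - α))) atTop (𝓝 0) := by
    apply Asymptotics.IsLittleO.tendsto_div_nhds_zero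
    have hsub : Tendsto (fun x : ℝ => x - 1) atTop atTop :=
      tendsto_atTop_add_const_right atTop (-1) tendsto_id
    have hden : Tendsto (fun x : ℝ => (x - 1) ^ (1 - α)) atTop atTop :=
      (tendsto_rpow_atTop (by linarith)).comp hsub
    have h1 : (fun _ : ℝ => -Real.log (1 - (2:ℝ) ^ (-α))) =o[atTop]
        fun x : ℝ => (x - 1) ^ (1 - α) := by
      apply Asymptotics.isLittleO_const_left.2
      right
      have : Tendsto (fun x : ℝ => |(x - 1) ^ (1 - α)|) atTop atTop :=
        tendsto_abs_atTop_atTop.comp hden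
      simpa [Function.comp_def, Real.norm_eq_abs] using this
    have hlog : (fun x : ℝ => Real.log (x - 1)) =o[atTop]
        fun x : ℝ => (x - 1) ^ (1 - α) :=
      (isLittleO_log_rpow_atTop (by linarith)).comp_tendsto hsub
    have hbig : (fun x : ℝ => Real.log (x + 2)) =O[atTop]
        fun x : ℝ => Real.log (x - 1) := by
      apply Asymptotics.IsBigO.of_bound 2
      filter_upwards [Filter.eventually_ge_atTop (4:ℝ)] with x hx
      have h2 : (1:ℝ) ≤ x - 1 := by linarith
      have h3 : (0:ℝ) < x + 2 := by linarith
      have h4 : x + 2 ≤ (x - 1) ^ (2:ℕ) := by nlinarith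
      have h5 : Real.log (x + 2) ≤ 2 * Real.log (x - 1) := by
        calc Real.log (x + 2) ≤ Real.log ((x - 1) ^ (2:ℕ)) := Real.log_le_log h3 h4
          _ = 2 * Real.log (x - 1) := by rw [Real.log_pow]; norm_num
      have h6 : 0 ≤ Real.log (x - 1) := Real.log_nonneg h2
      have h7 : 0 ≤ Real.log (x + 2) := Real.log_nonneg (by linarith)
      rw [Real.norm_eq_abs, Real.norm_eq_abs, abs_of_nonneg h7, abs_of_nonneg h6]
      linarith
    have h2 : (fun x : ℝ => α * Real.log (x + 2)) =o[atTop]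
        fun x : ℝ => (x - 1) ^ (1 - α) :=
      (hbig.trans_isLittleO hlog).const_mul_left α
    exact (h1.add h2).const_mul_right (ne_of_gt hc2)
  have := hreal.comp tendsto_natCast_atTop_atTop
  exact this


lemma ratio_upper (hα0 : 0 < α) (hα1 : α < 1) {r : ℝ} (hr0 : 0 < r)
    (hr2 : r < aSeq α 2) :
    Real.log (psiFun α r) / Real.log r ≤ 1 + Bfun α (nfun α r) := by
  set c2 : ℝ := (2:ℝ) ^ (-α) with hc2def
  have hc2 : (0:ℝ) < c2 := Real.rpow_pos_of_pos (by norm_num) _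
  have hc2lt : c2 < 1 := rpow_lt_one' hα0 (by norm_num)
  -- r < 1
  have hr1 : r < 1 := lt_of_lt_of_le hr2 (aSeq_le_one hα0 2)
  have hlogr : Real.log r < 0 := Real.log_neg hr0 hr1
  -- N = M + 3
  have hN : 2 < nfun α r := lt_nfun_of_lt hα0 hα1 hr0 hr2
  obtain ⟨M, hM⟩ : ∃ M, nfun α r = M + 3 := ⟨nfun α r - 3, by omega⟩
  have hra : r < aSeq α (M + 2) := lt_aSeq_of_lt_nfun (by omega)
  -- ψ r explicitly
  have hψ : psiFun α r
      = aSeq α (M + 2) * (1 - ((M:ℝ) + 4) ^ (-α)) * (((M:ℝ) + 5) ^ (-α)) := by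
    rw [psiFun, hM, gapSeq, show M + 3 = (M + 2) + 1 from rfl, aSeq_succ]
    push_cast
    ring_nf
  have hMnn : (0:ℝ) ≤ (M:ℝ) := Nat.cast_nonneg M
  have hM4 : ((M:ℝ) + 4) ^ (-α) ≤ c2 :=
    Real.rpow_le_rpow_of_nonpos (by norm_num) (by linarith) (by linarith)
  have hM5pos : (0:ℝ) < ((M:ℝ) + 5) ^ (-α) := Real.rpow_pos_of_pos (by linarith) _
  have ha2pos : 0 < aSeq α (M + 2) := aSeq_pos hα0 _
  have hψ_ge : r * ((1 - c2) * ((M:ℝ) + 5) ^ (-α)) ≤ psiFun α r := by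
    rw [hψ]
    have h1 : r * (1 - c2) ≤ aSeq α (M + 2) * (1 - ((M:ℝ) + 4) ^ (-α)) :=
      mul_le_mul hra.le (by linarith) (by linarith) ha2pos.le
    calc r * ((1 - c2) * ((M:ℝ)+5)^(-α)) = (r * (1 - c2)) * ((M:ℝ)+5)^(-α) := by ring
      _ ≤ aSeq α (M+2) * (1 - ((M:ℝ)+4)^(-α)) * ((M:ℝ)+5)^(-α) :=
          mul_le_mul_of_nonneg_right h1 hM5pos.le
  set C : ℝ := -Real.log (1 - c2) with hC
  set D : ℝ := C + α * Real.log ((M:ℝ) + 5) with hD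
  have hCpos : 0 < C := by
    rw [hC, neg_pos]
    exact Real.log_neg (by linarith) (by linarith)
  have hDnn : 0 ≤ D := by
    have hl5 : 0 ≤ Real.log ((M:ℝ) + 5) := Real.log_nonneg (by linarith)
    rw [hD]
    have := mul_nonneg hα0.le hl5
    linarith
  have hlogψ : Real.log r - D ≤ Real.log (psiFun α r) := by
    have hargpos : 0 < r * ((1 - c2) * ((M:ℝ)+5)^(-α)) :=
      mul_pos hr0 (mul_pos (by linarith) hM5pos)
    have h2 : Real.log (r * ((1 - c2) * ((M:ℝ)+5)^(-α))) ≤ Real.log (psiFun α r) :=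
      Real.log_le_log hargpos hψ_ge
    rw [Real.log_mul (ne_of_gt hr0) (ne_of_gt (mul_pos (by linarith) hM5pos)),
      Real.log_mul (by linarith : (1:ℝ) - c2 ≠ 0) (ne_of_gt hM5pos),
      Real.log_rpow (by linarith)] at h2
    rw [hD, hC]
    linarith
  have hden : c2 * ((M:ℝ) + 2) ^ (1 - α) ≤ -Real.log r := by
    have h3 : Real.log r ≤ Real.log (aSeq α (M + 2)) := Real.log_le_log hr0 hra.le
    have h4 := log_aSeq_le hα0 hα1 (k := M + 2) (by omega)
    have hcast : ((M + 2 : ℕ) : ℝ) = (M:ℝ) + 2 := by push_cast; ring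
    rw [hcast] at h4
    linarith
  set den : ℝ := c2 * ((M:ℝ) + 2) ^ (1 - α) with hdenDef
  have hden0 : 0 < den := by
    rw [hdenDef]
    exact mul_pos hc2 (Real.rpow_pos_of_pos (by linarith) _)
  have hBval : Bfun α (nfun α r) = D / den := by
    rw [hM, Bfun, hD, hC, hdenDef, hc2def]
    have c1 : ((M + 3 : ℕ) : ℝ) + 2 = (M:ℝ) + 5 := by push_cast; ring
    have c2' : ((M + 3 : ℕ) : ℝ) - 1 = (M:ℝ) + 2 := by push_cast; ring
    rw [c1, c2']
  rw [hBval, div_le_iff_of_neg hlogr]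
  have hq : 0 ≤ D / den := div_nonneg hDnn hden0.le
  have hqd : D / den * den = D := div_mul_cancel₀ D (ne_of_gt hden0)
  have key : D / den * Real.log r ≤ -D := by
    have h5 : Real.log r ≤ -den := by linarith
    calc D / den * Real.log r ≤ D / den * (-den) := mul_le_mul_of_nonneg_left h5 hq
      _ = -D := by rw [mul_neg, hqd]
  have expand : (1 + D / den) * Real.log r = Real.log r + D / den * Real.log r := by ring
  linarith

lemma ratio_tendsto (hα0 : 0 < α) (hα1 : α < 1) :
    Tendsto (fun r => Real.log (psiFun α r) / Real.log r) (𝓝[>] (0 : ℝ)) (𝓝 1) := by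
  have hmem : Ioo (0:ℝ) (aSeq α 2) ∈ 𝓝[>] (0:ℝ) :=
    Ioo_mem_nhdsGT_of_mem ⟨le_refl _, aSeq_pos hα0 2⟩
  have hlower : ∀ᶠ r in 𝓝[>] (0:ℝ),
      (1:ℝ) ≤ Real.log (psiFun α r) / Real.log r := by
    filter_upwards [hmem] with r hr
    have hr0 : 0 < r := hr.1
    have hr1 : r < 1 := lt_of_lt_of_le hr.2 (aSeq_le_one hα0 2)
    have hlogr : Real.log r < 0 := Real.log_neg hr0 hr1
    have hψlt : psiFun α r < r := psi_lt hα0 hα1 hr0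
    have hψpos : 0 < psiFun α r := psi_pos hα0
    have : Real.log (psiFun α r) ≤ Real.log r := Real.log_le_log hψpos hψlt.le
    rw [le_div_iff_of_neg hlogr]
    linarith
  have hupper : ∀ᶠ r in 𝓝[>] (0:ℝ),
      Real.log (psiFun α r) / Real.log r ≤ 1 + Bfun α (nfun α r) := by
    filter_upwards [hmem] with r hr
    exact ratio_upper hα0 hα1 hr.1 hr.2
  have hB : Tendsto (fun r => 1 + Bfun α (nfun α r)) (𝓝[>] (0:ℝ)) (𝓝 1) := by
    have := ((Bfun_tendsto hα0 hα1).comp (nfun_tendsto hα0 hα1)).const_add 1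
    simpa using this
  exact tendsto_of_tendsto_of_tendsto_of_le_of_le' tendsto_const_nhds hB hlower hupper


lemma mem_aSet_iff {x : ℝ} : x ∈ aSet α ↔ x = 0 ∨ ∃ k, x = aSeq α k := by
  simp only [aSet, Set.mem_insert_iff, Set.mem_setOf_eq]
  constructor
  · rintro (h | h | ⟨k, _, h⟩)
    · exact Or.inl h
    · exact Or.inr ⟨0, by rw [h, aSeq_zero]⟩
    · exact Or.inr ⟨k, h⟩
  · rintro (h | ⟨k, h⟩)
    · exact Or.inl h
    · cases k with
      | zero => exact Or.inr (Or.inl (by rw [h, aSeq_zero]))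
      | succ n => exact Or.inr (Or.inr ⟨n + 1, by omega, h⟩)

lemma aSet_nonneg (hα0 : 0 < α) {x : ℝ} (hx : x ∈ aSet α) : 0 ≤ x := by
  rcases mem_aSet_iff.1 hx with rfl | ⟨k, rfl⟩
  exacts [le_refl _, (aSeq_pos hα0 k).le]

lemma aSeq_far (hα0 : 0 < α) {z : ℝ} (hz : z ∈ aSet α) {k M : ℕ} (hkM : k ≤ M)
    (hne : z ≠ aSeq α k) : gapSeq α M ≤ |z - aSeq α k| := by
  have hgM : ∀ j, j ≤ M → gapSeq α M ≤ gapSeq α j := fun j hj =>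
    (gap_strictAnti hα0).antitone hj
  rcases mem_aSet_iff.1 hz with rfl | ⟨j, rfl⟩
  · have h1 : gapSeq α k < aSeq α k := gap_lt hα0 k
    have h2 : gapSeq α M ≤ gapSeq α k := hgM k hkM
    rw [zero_sub, abs_neg, abs_of_pos (aSeq_pos hα0 k)]
    linarith
  · have hjk : j ≠ k := fun h => hne (by rw [h])
    rcases lt_or_gt_of_ne hjk with hlt | hgt
    · have h1 : aSeq α k ≤ aSeq α (j + 1) := (aSeq_strictAnti hα0).antitone (by omega)
      have h2 : gapSeq α j = aSeq α j - aSeq α (j + 1) := gap_eq_sub j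
      have h3 : gapSeq α M ≤ gapSeq α j := hgM j (by omega)
      have h4 : 0 < gapSeq α j := gap_pos hα0 j
      rw [abs_of_nonneg (by linarith)]
      linarith
    · have h1 : aSeq α j ≤ aSeq α (k + 1) := (aSeq_strictAnti hα0).antitone (by omega)
      have h2 : gapSeq α k = aSeq α k - aSeq α (k + 1) := gap_eq_sub k
      have h3 : gapSeq α M ≤ gapSeq α k := hgM k hkM
      have h4 : 0 < gapSeq α k := gap_pos hα0 k
      rw [abs_sub_comm, abs_of_nonneg (by linarith)]
      linarith

lemma le_of_mem_gt (hα0 : 0 < α) {z : ℝ} (hz : z ∈ aSet α) {M : ℕ}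
    (hgt : aSeq α (M + 1) < z) : aSeq α M ≤ z := by
  rcases mem_aSet_iff.1 hz with rfl | ⟨j, rfl⟩
  · linarith [aSeq_pos hα0 (M + 1)]
  · by_contra hc
    push_neg at hc
    have hj : M < j := by
      by_contra hj
      push_neg at hj
      exact absurd ((aSeq_strictAnti hα0).antitone hj) (not_le.2 hc)
    have := (aSeq_strictAnti hα0).antitone (show M + 1 ≤ j from hj)
    linarith

end QUD

theorem aSet_quasiUniformlyDisconnected (α : ℝ) (hα0 : 0 < α) (hα1 : α < 1) :
    QuasiUniformlyDisconnectedSet (aSet α) := by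
  refine ⟨QUD.psiFun α, fun r hr => ⟨QUD.psi_pos hα0, QUD.psi_lt hα0 hα1 hr⟩,
    QUD.ratio_tendsto hα0 hα1, aSeq α 2, QUD.aSeq_pos hα0 2, ?_⟩
  intro x hx r hr0 hr2
  have hN : 2 < QUD.nfun α r := QUD.lt_nfun_of_lt hα0 hα1 hr0 hr2
  obtain ⟨M, hM⟩ : ∃ M, QUD.nfun α r = M + 1 := ⟨QUD.nfun α r - 1, by omega⟩
  have hψ_eq : QUD.psiFun α r = QUD.gapSeq α (M + 1) := by
    simp only [QUD.psiFun, hM]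
  have hψpos : 0 < QUD.psiFun α r := QUD.psi_pos hα0
  have hgapM : QUD.psiFun α r < QUD.gapSeq α M := by
    rw [hψ_eq]
    exact QUD.gap_strictAnti hα0 (Nat.lt_succ_self M)
  have hAle : aSeq α (M + 1) ≤ r := by
    rw [← hM]
    exact QUD.aSeq_nfun_le hα0 hα1 hr0
  by_cases hcase : ∃ k, k ≤ M ∧ x = aSeq α k
  · obtain ⟨k, hkM, rfl⟩ := hcase
    refine ⟨{aSeq α k}, by simpa using hx, ?_, ?_, ?_⟩
    · rintro z ⟨hzE, hzB⟩
      rw [Set.mem_singleton_iff]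
      by_contra hne
      have h1 := QUD.aSeq_far hα0 hzE hkM hne
      rw [Metric.mem_closedBall, Real.dist_eq] at hzB
      linarith
    · intro y hy
      rw [Set.mem_singleton_iff] at hy
      subst hy
      rw [Metric.mem_closedBall, dist_self]
      exact hr0.le
    · rintro y hy z ⟨hzE, hzF⟩
      rw [Set.mem_singleton_iff] at hy
      subst hy
      have hne : z ≠ aSeq α k := by simpa using hzF
      have h1 := QUD.aSeq_far hα0 hzE hkM hne
      rw [Real.dist_eq, abs_sub_comm]
      linarith
  · push_neg at hcase
    have hxle : x ≤ aSeq α (M + 1) := by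
      rcases QUD.mem_aSet_iff.1 hx with rfl | ⟨k, rfl⟩
      · exact (QUD.aSeq_pos hα0 _).le
      · have hk : M + 1 ≤ k := by
          by_contra h
          push_neg at h
          exact hcase k (by omega) rfl
        exact (QUD.aSeq_strictAnti hα0).antitone hk
    have hx0 : 0 ≤ x := QUD.aSet_nonneg hα0 hx
    have h2 : QUD.gapSeq α M = aSeq α M - aSeq α (M + 1) := QUD.gap_eq_sub M
    refine ⟨aSet α ∩ Set.Iic (aSeq α (M + 1)), Set.inter_subset_left, ?_, ?_, ?_⟩
    · rintro z ⟨hzE, hzB⟩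
      refine ⟨hzE, ?_⟩
      rw [Set.mem_Iic]
      by_contra hgt
      push_neg at hgt
      have h1 : aSeq α M ≤ z := QUD.le_of_mem_gt hα0 hzE hgt
      rw [Metric.mem_closedBall, Real.dist_eq] at hzB
      have h3 : z - x ≤ |z - x| := le_abs_self _
      linarith
    · rintro y ⟨hyE, hyle⟩
      rw [Set.mem_Iic] at hyle
      have hy0 : 0 ≤ y := QUD.aSet_nonneg hα0 hyE
      rw [Metric.mem_closedBall, Real.dist_eq, abs_le]
      constructor <;> linarith [QUD.aSeq_pos hα0 (M + 1)]
    · rintro y ⟨hyE, hyle⟩ z ⟨hzE, hzF⟩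
      rw [Set.mem_Iic] at hyle
      have hzgt : aSeq α (M + 1) < z := by
        by_contra h
        push_neg at h
        exact hzF ⟨hzE, h⟩
      have h1 : aSeq α M ≤ z := QUD.le_of_mem_gt hα0 hzE hzgt
      rw [Real.dist_eq]
      have h3 : z - y ≤ |y - z| := by
        rw [abs_sub_comm]
        exact le_abs_self _
      linarith
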